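/- Let p ≥ 5 be a prime and let q_p be the Fermat quotient of 2. Then in ℤ/pℤ: T_p(1̄,1̄) = 2 · T_p(1,1̄), S_p(1̄,1̄) = −2 · t_p(1,1̄), and t_p(1̄,1̄) = ζ^{(2)}_p(1̄,1̄) = q_p^2 / 8. -/

import Mathlib

open Finset

/-- The Fermat quotient of 2: the residue class mod `p` of `(2^{p-1} - 1)/p`. -/
def qp (p : ℕ) : ZMod p := (((2 ^ (p - 1) - 1) / p : ℕ) : ZMod p)

/-- `T_p(1̄,1̄)`: sum over `p > m > n > 0`, `m` even, `n` odd, of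
`(-1)^{m/2}(-1)^{(n+1)/2}/(mn)` in `ℤ/pℤ`. -/
def Tpbb (p : ℕ) : ZMod p :=
  ∑ m ∈ (Finset.Ioo 0 p).filter (fun m => m % 2 = 0),
    ∑ n ∈ (Finset.Ioo 0 m).filter (fun n => n % 2 = 1),
      (-1 : ZMod p) ^ (m / 2) * (-1 : ZMod p) ^ ((n + 1) / 2) *
        ((m : ZMod p) * (n : ZMod p))⁻¹

/-- `T_p(1,1̄)`: sum over `p > m > n > 0`, `m` even, `n` odd, of
`(-1)^{(n+1)/2}/(mn)` in `ℤ/pℤ`. -/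
def Tp1b (p : ℕ) : ZMod p :=
  ∑ m ∈ (Finset.Ioo 0 p).filter (fun m => m % 2 = 0),
    ∑ n ∈ (Finset.Ioo 0 m).filter (fun n => n % 2 = 1),
      (-1 : ZMod p) ^ ((n + 1) / 2) * ((m : ZMod p) * (n : ZMod p))⁻¹

/-- `S_p(1̄,1̄)`: sum over `p > m > n > 0`, `m` odd, `n` even, of
`(-1)^{(m+1)/2}(-1)^{n/2}/(mn)` in `ℤ/pℤ`. -/
def Spbb (p : ℕ) : ZMod p :=
  ∑ m ∈ (Finset.Ioo 0 p).filter (fun m => m % 2 = 1),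
    ∑ n ∈ (Finset.Ioo 0 m).filter (fun n => n % 2 = 0),
      (-1 : ZMod p) ^ ((m + 1) / 2) * (-1 : ZMod p) ^ (n / 2) *
        ((m : ZMod p) * (n : ZMod p))⁻¹

/-- `t_p(1,1̄)`: sum over `p > m > n > 0`, `m, n` both odd, of
`(-1)^{(n+1)/2}/(mn)` in `ℤ/pℤ`. -/
def tp1b (p : ℕ) : ZMod p :=
  ∑ m ∈ (Finset.Ioo 0 p).filter (fun m => m % 2 = 1),
    ∑ n ∈ (Finset.Ioo 0 m).filter (fun n => n % 2 = 1),
      (-1 : ZMod p) ^ ((n + 1) / 2) * ((m : ZMod p) * (n : ZMod p))⁻¹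

/-- `t_p(1̄,1̄)`: sum over `p > m > n > 0`, `m, n` both odd, of
`(-1)^{(m+1)/2}(-1)^{(n+1)/2}/(mn)` in `ℤ/pℤ`. -/
def tpbb (p : ℕ) : ZMod p :=
  ∑ m ∈ (Finset.Ioo 0 p).filter (fun m => m % 2 = 1),
    ∑ n ∈ (Finset.Ioo 0 m).filter (fun n => n % 2 = 1),
      (-1 : ZMod p) ^ ((m + 1) / 2) * (-1 : ZMod p) ^ ((n + 1) / 2) *
        ((m : ZMod p) * (n : ZMod p))⁻¹

/-- `ζ^{(2)}_p(1̄,1̄)`: sum over `p > m > n > 0`, `m, n` both even, of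
`(-1)^{m/2}(-1)^{n/2}/(mn)` in `ℤ/pℤ`. -/
def zeta2pbb (p : ℕ) : ZMod p :=
  ∑ m ∈ (Finset.Ioo 0 p).filter (fun m => m % 2 = 0),
    ∑ n ∈ (Finset.Ioo 0 m).filter (fun n => n % 2 = 0),
      (-1 : ZMod p) ^ (m / 2) * (-1 : ZMod p) ^ (n / 2) *
        ((m : ZMod p) * (n : ZMod p))⁻¹

namespace AMV
set_option linter.unusedSectionVars false

variable (p : ℕ)

def rr (n : ℕ) : ZMod p := if n % 2 = 0 then 1 else -1
def cc (n : ℕ) : ZMod p := if n % 4 = 0 then 1 else if n % 4 = 2 then -1 else 0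
def ss (n : ℕ) : ZMod p := if n % 4 = 1 then 1 else if n % 4 = 3 then -1 else 0
def ee (n : ℕ) : ZMod p := if n % 2 = 0 then 1 else 0
def oo (n : ℕ) : ZMod p := if n % 2 = 1 then 1 else 0
def ep : ZMod p := if p % 4 = 1 then 1 else -1
def iv (n : ℕ) : ZMod p := (n : ZMod p)⁻¹
def one : ℕ → ZMod p := fun _ => 1

def L (f : ℕ → ZMod p) : ZMod p := ∑ n ∈ Ioo 0 p, f n * iv p n
def D (f : ℕ → ZMod p) : ZMod p := ∑ n ∈ Ioo 0 p, f n * iv p n * iv p n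
def Pp : Finset (ℕ × ℕ) := (Ioo 0 p ×ˢ Ioo 0 p).filter fun x => x.2 < x.1
def Qq : Finset (ℕ × ℕ) := (Ioo 0 p ×ˢ Ioo 0 p).filter fun x => x.1 + x.2 < p
def W (f g : ℕ → ZMod p) : ZMod p := ∑ x ∈ Pp p, f x.1 * g x.2 * iv p x.1 * iv p x.2
def Tri (f g : ℕ → ZMod p) : ZMod p := ∑ x ∈ Qq p, f x.1 * g x.2 * iv p x.1 * iv p x.2

lemma mem_Pp {x : ℕ × ℕ} : x ∈ Pp p ↔ 0 < x.2 ∧ x.2 < x.1 ∧ x.1 < p := by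
  simp only [Pp, mem_filter, mem_product, mem_Ioo]; omega

lemma mem_Qq {x : ℕ × ℕ} : x ∈ Qq p ↔ 0 < x.1 ∧ 0 < x.2 ∧ x.1 + x.2 < p := by
  simp only [Qq, mem_filter, mem_product, mem_Ioo]; omega

variable [hF : Fact p.Prime]

lemma hp0 : 0 < p := hF.out.pos

lemma cast_ne {n : ℕ} (h1 : 0 < n) (h2 : n < p) : (n : ZMod p) ≠ 0 := by
  rw [Ne, ZMod.natCast_eq_zero_iff]
  intro hd; exact absurd (Nat.le_of_dvd h1 hd) (by omega)

lemma cast_p_sub {n : ℕ} (h : n ≤ p) : ((p - n : ℕ) : ZMod p) = -(n : ZMod p) := by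
  rw [Nat.cast_sub h, ZMod.natCast_self, zero_sub]

lemma iv_p_sub {n : ℕ} (h : n ≤ p) : iv p (p - n) = -iv p n := by
  rw [iv, cast_p_sub p h, inv_neg, iv]

lemma L_reflect (f : ℕ → ZMod p) : ∑ n ∈ Ioo 0 p, f (p - n) * iv p n = -L p f := by
  rw [L, ← Finset.sum_neg_distrib]
  refine Finset.sum_nbij' (fun n => p - n) (fun n => p - n) ?_ ?_ ?_ ?_ ?_ <;>
    simp only [mem_Ioo] <;> intro a ha
  · omega
  · omega
  · omega
  · omega
  · rw [iv_p_sub p (by omega)]; ring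


lemma D_reflect (f : ℕ → ZMod p) :
    ∑ n ∈ Ioo 0 p, f (p - n) * iv p n * iv p n = D p f := by
  rw [D]
  refine Finset.sum_nbij' (fun n => p - n) (fun n => p - n) ?_ ?_ ?_ ?_ ?_ <;>
    simp only [mem_Ioo] <;> intro a ha
  · omega
  · omega
  · omega
  · omega
  · rw [iv_p_sub p (by omega)]; ring

lemma W_nested (f g : ℕ → ZMod p) :
    W p f g = ∑ m ∈ Ioo 0 p, ∑ n ∈ Ioo 0 m, f m * g n * iv p m * iv p n := by
  rw [W, Pp, Finset.sum_filter, Finset.sum_product]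
  refine Finset.sum_congr rfl fun m hm => ?_
  rw [mem_Ioo] at hm
  rw [← Finset.sum_filter]
  refine Finset.sum_congr ?_ fun n _ => rfl
  ext n; simp only [mem_filter, mem_Ioo]; omega

lemma Tri_symm (f g : ℕ → ZMod p) : Tri p f g = Tri p g f := by
  rw [Tri, Tri]
  refine Finset.sum_nbij' (fun x => (x.2, x.1)) (fun x => (x.2, x.1)) ?_ ?_ ?_ ?_ ?_
  · intro a ha; simp only [mem_Qq] at *; omega
  · intro a ha; simp only [mem_Qq] at *; omega
  · intro a _; rfl
  · intro a _; rfl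
  · intro a _; ring

lemma W_reflect (f g : ℕ → ZMod p) :
    W p f g = ∑ x ∈ Pp p, g (p - x.1) * f (p - x.2) * iv p x.1 * iv p x.2 := by
  rw [W]
  refine Finset.sum_nbij' (fun x => (p - x.2, p - x.1)) (fun x => (p - x.2, p - x.1))
    ?_ ?_ ?_ ?_ ?_ <;> intro a ha <;> simp only [mem_Pp] at *
  · omega
  · omega
  · have : p - (p - a.1) = a.1 := by omega
    have h2 : p - (p - a.2) = a.2 := by omega
    simp [this, h2]
  · have : p - (p - a.1) = a.1 := by omega
    have h2 : p - (p - a.2) = a.2 := by omega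
    simp [this, h2]
  · have e1 : p - (p - a.2) = a.2 := by omega
    have e2 : p - (p - a.1) = a.1 := by omega
    rw [e1, e2, iv_p_sub p (by omega), iv_p_sub p (by omega)]
    ring

lemma stuffle (f g : ℕ → ZMod p) :
    W p f g + W p g f + D p (fun n => f n * g n) = L p f * L p g := by
  set F : ℕ × ℕ → ZMod p := fun x => (f x.1 * iv p x.1) * (g x.2 * iv p x.2) with hF'
  have key := Finset.sum_filter_add_sum_filter_not (Ioo 0 p ×ˢ Ioo 0 p)
    (fun x => x.2 < x.1) F
  have key2 := Finset.sum_filter_add_sum_filter_not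
    ((Ioo 0 p ×ˢ Ioo 0 p).filter fun x => ¬ x.2 < x.1) (fun x => x.1 < x.2) F
  have hA : ∑ x ∈ (Ioo 0 p ×ˢ Ioo 0 p).filter (fun x => x.2 < x.1), F x = W p f g := by
    rw [W, Pp]; exact Finset.sum_congr rfl fun x _ => by simp only [hF']; ring
  have hB : ∑ x ∈ ((Ioo 0 p ×ˢ Ioo 0 p).filter fun x => ¬ x.2 < x.1).filter
      (fun x => x.1 < x.2), F x = W p g f := by
    rw [W]
    refine Finset.sum_nbij' (fun x => (x.2, x.1)) (fun x => (x.2, x.1)) ?_ ?_ ?_ ?_ ?_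
    · intro a ha
      simp only [mem_filter, mem_product, mem_Ioo] at ha
      simp only [mem_Pp]; omega
    · intro a ha
      simp only [mem_Pp] at ha
      simp only [mem_filter, mem_product, mem_Ioo]; omega
    · intro a _; rfl
    · intro a _; rfl
    · intro a _; simp only [hF']; ring
  have hC : ∑ x ∈ ((Ioo 0 p ×ˢ Ioo 0 p).filter fun x => ¬ x.2 < x.1).filter
      (fun x => ¬ x.1 < x.2), F x = D p (fun n => f n * g n) := by
    rw [D]
    refine Finset.sum_nbij' (fun x => x.1) (fun n => (n, n)) ?_ ?_ ?_ ?_ ?_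
    · intro a ha
      simp only [mem_filter, mem_product, mem_Ioo] at ha
      simp only [mem_Ioo]; omega
    · intro a ha
      simp only [mem_Ioo] at ha
      simp only [mem_filter, mem_product, mem_Ioo]; omega
    · intro a ha
      simp only [mem_filter, mem_product, mem_Ioo] at ha
      obtain ⟨a1, a2⟩ := a
      simp only [Prod.mk.injEq, and_true, true_and]
      dsimp only at ha
      omega
    · intro a _; rfl
    · intro a ha
      simp only [mem_filter, mem_product, mem_Ioo] at ha
      obtain ⟨a1, a2⟩ := a
      have : a2 = a1 := by simp only at ha; omega
      subst this
      simp only [hF']; ring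
  have hL : L p f * L p g = ∑ x ∈ Ioo 0 p ×ˢ Ioo 0 p, F x := by
    rw [L, L, Finset.sum_mul_sum, Finset.sum_product]
  linear_combination key + key2 - hA - hB - hC - hL

lemma box (f g : ℕ → ZMod p) :
    Tri p f g + (∑ x ∈ Qq p, f (p - x.1) * g (p - x.2) * iv p x.1 * iv p x.2)
      = L p f * L p g + ∑ n ∈ Ioo 0 p, f (p - n) * g n * iv p n * iv p n := by
  set F : ℕ × ℕ → ZMod p := fun x => (f x.1 * iv p x.1) * (g x.2 * iv p x.2) with hF'
  have key := Finset.sum_filter_add_sum_filter_not (Ioo 0 p ×ˢ Ioo 0 p)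
    (fun x => x.1 + x.2 < p) F
  have key2 := Finset.sum_filter_add_sum_filter_not
    ((Ioo 0 p ×ˢ Ioo 0 p).filter fun x => ¬ x.1 + x.2 < p) (fun x => x.1 + x.2 = p) F
  have hA : ∑ x ∈ (Ioo 0 p ×ˢ Ioo 0 p).filter (fun x => x.1 + x.2 < p), F x = Tri p f g := by
    rw [Tri, Qq]; exact Finset.sum_congr rfl fun x _ => by simp only [hF']; ring
  have hB : ∑ x ∈ ((Ioo 0 p ×ˢ Ioo 0 p).filter fun x => ¬ x.1 + x.2 < p).filter
      (fun x => x.1 + x.2 = p), F x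
      = -∑ n ∈ Ioo 0 p, f (p - n) * g n * iv p n * iv p n := by
    rw [← Finset.sum_neg_distrib]
    refine Finset.sum_nbij' (fun x => x.2) (fun n => (p - n, n)) ?_ ?_ ?_ ?_ ?_
    · intro a ha
      simp only [mem_filter, mem_product, mem_Ioo] at ha
      simp only [mem_Ioo]; omega
    · intro a ha
      simp only [mem_Ioo] at ha
      simp only [mem_filter, mem_product, mem_Ioo]; omega
    · intro a ha
      simp only [mem_filter, mem_product, mem_Ioo] at ha
      obtain ⟨a1, a2⟩ := a
      simp only [Prod.mk.injEq, and_true, true_and]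
      dsimp only at ha
      omega
    · intro a _; rfl
    · intro a ha
      simp only [mem_filter, mem_product, mem_Ioo] at ha
      have h1 : a.1 = p - a.2 := by omega
      rw [hF']
      simp only
      rw [h1, iv_p_sub p (show a.2 ≤ p by omega)]
      ring
  have hC : ∑ x ∈ ((Ioo 0 p ×ˢ Ioo 0 p).filter fun x => ¬ x.1 + x.2 < p).filter
      (fun x => ¬ x.1 + x.2 = p), F x
      = ∑ x ∈ Qq p, f (p - x.1) * g (p - x.2) * iv p x.1 * iv p x.2 := by
    refine Finset.sum_nbij' (fun x => (p - x.1, p - x.2)) (fun x => (p - x.1, p - x.2))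
      ?_ ?_ ?_ ?_ ?_
    · intro a ha
      simp only [mem_filter, mem_product, mem_Ioo] at ha
      simp only [mem_Qq]; omega
    · intro a ha
      simp only [mem_Qq] at ha
      simp only [mem_filter, mem_product, mem_Ioo]; omega
    · intro a ha
      simp only [mem_filter, mem_product, mem_Ioo] at ha
      obtain ⟨a1, a2⟩ := a
      simp only [Prod.mk.injEq, and_true, true_and]
      dsimp only at ha
      omega
    · intro a ha
      simp only [mem_Qq] at ha
      obtain ⟨a1, a2⟩ := a
      simp only [Prod.mk.injEq, and_true, true_and]
      dsimp only at ha
      omega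
    · intro a ha
      simp only [mem_filter, mem_product, mem_Ioo] at ha
      have e1 : p - (p - a.1) = a.1 := by omega
      have e2 : p - (p - a.2) = a.2 := by omega
      rw [hF']
      simp only
      rw [e1, e2, iv_p_sub p (show a.1 ≤ p by omega), iv_p_sub p (show a.2 ≤ p by omega)]
      ring
  have hL : L p f * L p g = ∑ x ∈ Ioo 0 p ×ˢ Ioo 0 p, F x := by
    rw [L, L, Finset.sum_mul_sum, Finset.sum_product]
  linear_combination key + key2 - hA - hB - hC - hL

lemma inv_split {m n : ℕ} (h0 : 0 < n) (h1 : n < m) (h2 : m < p) :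
    iv p (m - n) * iv p n = iv p m * iv p n + iv p (m - n) * iv p m := by
  have hm : (m : ZMod p) ≠ 0 := cast_ne p (by omega) h2
  have hn : (n : ZMod p) ≠ 0 := cast_ne p h0 (by omega)
  have hd0 : ((m - n : ℕ) : ZMod p) ≠ 0 := cast_ne p (by omega) (by omega)
  have hd : ((m - n : ℕ) : ZMod p) = (m : ZMod p) - (n : ZMod p) := by
    rw [Nat.cast_sub (le_of_lt h1)]
  simp only [iv]
  rw [hd] at hd0 ⊢
  field_simp
  ring

lemma shuffle (f g : ℕ → ZMod p) :
    ∑ x ∈ Qq p, f (x.1 + x.2) * g x.2 * iv p x.1 * iv p x.2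
      = W p f g + ∑ x ∈ Pp p, f x.1 * g (x.1 - x.2) * iv p x.1 * iv p x.2 := by
  have h1 : ∑ x ∈ Qq p, f (x.1 + x.2) * g x.2 * iv p x.1 * iv p x.2
      = ∑ x ∈ Pp p, f x.1 * g x.2 * iv p (x.1 - x.2) * iv p x.2 := by
    refine Finset.sum_nbij' (fun x => (x.1 + x.2, x.2)) (fun x => (x.1 - x.2, x.2))
      ?_ ?_ ?_ ?_ ?_
    · intro a ha; simp only [mem_Qq] at ha; simp only [mem_Pp]; omega
    · intro a ha; simp only [mem_Pp] at ha; simp only [mem_Qq]; omega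
    · intro a ha
      simp only [mem_Qq] at ha
      obtain ⟨a1, a2⟩ := a
      simp only [Prod.mk.injEq, and_true, true_and]
      dsimp only at ha
      omega
    · intro a ha
      simp only [mem_Pp] at ha
      obtain ⟨a1, a2⟩ := a
      simp only [Prod.mk.injEq, and_true, true_and]
      dsimp only at ha
      omega
    · intro a ha
      simp only [mem_Qq] at ha
      have e : a.1 + a.2 - a.2 = a.1 := by omega
      rw [e]
  have h2 : ∑ x ∈ Pp p, f x.1 * g x.2 * iv p (x.1 - x.2) * iv p x.2
      = W p f g + ∑ x ∈ Pp p, f x.1 * g x.2 * iv p (x.1 - x.2) * iv p x.1 := by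
    rw [W, ← Finset.sum_add_distrib]
    refine Finset.sum_congr rfl fun x hx => ?_
    rw [mem_Pp] at hx
    have := inv_split p (m := x.1) (n := x.2) hx.1 hx.2.1 hx.2.2
    linear_combination (f x.1 * g x.2) * this
  have h3 : ∑ x ∈ Pp p, f x.1 * g x.2 * iv p (x.1 - x.2) * iv p x.1
      = ∑ x ∈ Pp p, f x.1 * g (x.1 - x.2) * iv p x.1 * iv p x.2 := by
    refine Finset.sum_nbij' (fun x => (x.1, x.1 - x.2)) (fun x => (x.1, x.1 - x.2))
      ?_ ?_ ?_ ?_ ?_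
    · intro a ha; simp only [mem_Pp] at *; omega
    · intro a ha; simp only [mem_Pp] at *; omega
    · intro a ha
      simp only [mem_Pp] at ha
      obtain ⟨a1, a2⟩ := a
      simp only [Prod.mk.injEq, and_true, true_and]
      dsimp only at ha
      omega
    · intro a ha
      simp only [mem_Pp] at ha
      obtain ⟨a1, a2⟩ := a
      simp only [Prod.mk.injEq, and_true, true_and]
      dsimp only at ha
      omega
    · intro a ha
      simp only [mem_Pp] at ha
      have e : a.1 - (a.1 - a.2) = a.2 := by omega
      rw [e]
      ring
  rw [h1, h2, h3]

lemma cc_add (a b : ℕ) : cc p (a + b) = cc p a * cc p b - ss p a * ss p b := by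
  have ha : a % 4 = 0 ∨ a % 4 = 1 ∨ a % 4 = 2 ∨ a % 4 = 3 := by omega
  have hb : b % 4 = 0 ∨ b % 4 = 1 ∨ b % 4 = 2 ∨ b % 4 = 3 := by omega
  rcases ha with ha|ha|ha|ha <;> rcases hb with hb|hb|hb|hb <;>
    (have e : (a + b) % 4 = (a % 4 + b % 4) % 4 := by omega
     rw [ha, hb] at e
     simp [cc, ss, e, ha, hb]) <;>
    try norm_num

lemma ss_add (a b : ℕ) : ss p (a + b) = ss p a * cc p b + cc p a * ss p b := by
  have ha : a % 4 = 0 ∨ a % 4 = 1 ∨ a % 4 = 2 ∨ a % 4 = 3 := by omega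
  have hb : b % 4 = 0 ∨ b % 4 = 1 ∨ b % 4 = 2 ∨ b % 4 = 3 := by omega
  rcases ha with ha|ha|ha|ha <;> rcases hb with hb|hb|hb|hb <;>
    (have e : (a + b) % 4 = (a % 4 + b % 4) % 4 := by omega
     rw [ha, hb] at e
     simp [cc, ss, e, ha, hb]) <;>
    try norm_num

lemma cc_sub {a b : ℕ} (h : b ≤ a) : cc p (a - b) = cc p a * cc p b + ss p a * ss p b := by
  have ha : a % 4 = 0 ∨ a % 4 = 1 ∨ a % 4 = 2 ∨ a % 4 = 3 := by omega
  have hb : b % 4 = 0 ∨ b % 4 = 1 ∨ b % 4 = 2 ∨ b % 4 = 3 := by omega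
  rcases ha with ha|ha|ha|ha <;> rcases hb with hb|hb|hb|hb <;>
    (have e : (a - b) % 4 = (a % 4 + 4 - b % 4) % 4 := by omega
     rw [ha, hb] at e
     simp [cc, ss, e, ha, hb]) <;>
    try norm_num

lemma ss_sub {a b : ℕ} (h : b ≤ a) : ss p (a - b) = ss p a * cc p b - cc p a * ss p b := by
  have ha : a % 4 = 0 ∨ a % 4 = 1 ∨ a % 4 = 2 ∨ a % 4 = 3 := by omega
  have hb : b % 4 = 0 ∨ b % 4 = 1 ∨ b % 4 = 2 ∨ b % 4 = 3 := by omega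
  rcases ha with ha|ha|ha|ha <;> rcases hb with hb|hb|hb|hb <;>
    (have e : (a - b) % 4 = (a % 4 + 4 - b % 4) % 4 := by omega
     rw [ha, hb] at e
     simp [cc, ss, e, ha, hb]) <;>
    try norm_num

lemma rr_sub {a b : ℕ} (h : b ≤ a) : rr p (a - b) = rr p a * rr p b := by
  have ha : a % 2 = 0 ∨ a % 2 = 1 := by omega
  have hb : b % 2 = 0 ∨ b % 2 = 1 := by omega
  rcases ha with ha|ha <;> rcases hb with hb|hb <;>
    (have e : (a - b) % 2 = (a % 2 + 2 - b % 2) % 2 := by omega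
     rw [ha, hb] at e
     simp [rr, e, ha, hb]) <;>
    try norm_num

lemma cc_reflect {n : ℕ} (h : n ≤ p) (h2 : p % 2 = 1) : cc p (p - n) = ep p * ss p n := by
  have hp4 : p % 4 = 1 ∨ p % 4 = 3 := by omega
  have hn : n % 4 = 0 ∨ n % 4 = 1 ∨ n % 4 = 2 ∨ n % 4 = 3 := by omega
  rcases hp4 with hp4|hp4 <;> rcases hn with hn|hn|hn|hn <;>
    (have e : (p - n) % 4 = (p % 4 + 4 - n % 4) % 4 := by omega
     rw [hp4, hn] at e
     simp [cc, ss, ep, e, hp4, hn]) <;>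
    try norm_num

lemma ss_reflect {n : ℕ} (h : n ≤ p) (h2 : p % 2 = 1) : ss p (p - n) = ep p * cc p n := by
  have hp4 : p % 4 = 1 ∨ p % 4 = 3 := by omega
  have hn : n % 4 = 0 ∨ n % 4 = 1 ∨ n % 4 = 2 ∨ n % 4 = 3 := by omega
  rcases hp4 with hp4|hp4 <;> rcases hn with hn|hn|hn|hn <;>
    (have e : (p - n) % 4 = (p % 4 + 4 - n % 4) % 4 := by omega
     rw [hp4, hn] at e
     simp [cc, ss, ep, e, hp4, hn]) <;>
    try norm_num

lemma rr_reflect {n : ℕ} (h : n ≤ p) (h2 : p % 2 = 1) : rr p (p - n) = -rr p n := by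
  have hn : n % 2 = 0 ∨ n % 2 = 1 := by omega
  rcases hn with hn|hn <;>
    (have e : (p - n) % 2 = (p % 2 + 2 - n % 2) % 2 := by omega
     rw [h2, hn] at e
     simp [rr, e, hn]) <;>
    try norm_num

lemma oo_reflect {n : ℕ} (h : n ≤ p) (h2 : p % 2 = 1) : oo p (p - n) = ee p n := by
  have hn : n % 2 = 0 ∨ n % 2 = 1 := by omega
  rcases hn with hn|hn <;>
    (have e : (p - n) % 2 = (p % 2 + 2 - n % 2) % 2 := by omega
     rw [h2, hn] at e
     simp [oo, ee, e, hn]) <;>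
    try norm_num

lemma ss_sq (n : ℕ) : ss p n * ss p n = oo p n := by
  have hn : n % 4 = 0 ∨ n % 4 = 1 ∨ n % 4 = 2 ∨ n % 4 = 3 := by omega
  have h2 : n % 2 = n % 4 % 2 := by omega
  rcases hn with hn|hn|hn|hn <;> rw [hn] at h2 <;> simp [ss, oo, hn, h2] <;> try norm_num

lemma cc_mul_ss (n : ℕ) : cc p n * ss p n = 0 := by
  have hn : n % 4 = 0 ∨ n % 4 = 1 ∨ n % 4 = 2 ∨ n % 4 = 3 := by omega
  rcases hn with hn|hn|hn|hn <;> simp [ss, cc, hn]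

lemma cc_mul_rr (n : ℕ) : cc p n * rr p n = cc p n := by
  have hn : n % 4 = 0 ∨ n % 4 = 1 ∨ n % 4 = 2 ∨ n % 4 = 3 := by omega
  have h2 : n % 2 = n % 4 % 2 := by omega
  rcases hn with hn|hn|hn|hn <;> rw [hn] at h2 <;> simp [rr, cc, hn, h2] <;> try norm_num

lemma ss_mul_rr (n : ℕ) : ss p n * rr p n = -ss p n := by
  have hn : n % 4 = 0 ∨ n % 4 = 1 ∨ n % 4 = 2 ∨ n % 4 = 3 := by omega
  have h2 : n % 2 = n % 4 % 2 := by omega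
  rcases hn with hn|hn|hn|hn <;> rw [hn] at h2 <;> simp [rr, ss, hn, h2] <;> try norm_num

lemma ee_add_oo (n : ℕ) : ee p n + oo p n = 1 := by
  have hn : n % 2 = 0 ∨ n % 2 = 1 := by omega
  rcases hn with hn|hn <;> simp [ee, oo, hn]

lemma one_add_rr (n : ℕ) : 1 + rr p n = 2 * ee p n := by
  have hn : n % 2 = 0 ∨ n % 2 = 1 := by omega
  rcases hn with hn|hn <;> simp [ee, rr, hn] <;> try norm_num

lemma one_sub_rr (n : ℕ) : 1 - rr p n = 2 * oo p n := by
  have hn : n % 2 = 0 ∨ n % 2 = 1 := by omega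
  rcases hn with hn|hn <;> simp [oo, rr, hn] <;> try norm_num

lemma ep_sq : ep p * ep p = 1 := by
  rw [ep]; split_ifs <;> norm_num

lemma pow_half {n : ℕ} (h : n % 2 = 0) : (-1 : ZMod p) ^ (n / 2) = cc p n := by
  have hn : n % 4 = 0 ∨ n % 4 = 2 := by omega
  rcases hn with hn|hn
  · rw [Even.neg_one_pow (by rw [Nat.even_iff]; omega)]; simp [cc, hn]
  · rw [Odd.neg_one_pow (by rw [Nat.odd_iff]; omega)]; simp [cc, hn]

lemma pow_oddy {n : ℕ} (h : n % 2 = 1) : (-1 : ZMod p) ^ ((n + 1) / 2) = -ss p n := by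
  have hn : n % 4 = 1 ∨ n % 4 = 3 := by omega
  rcases hn with hn|hn
  · rw [Odd.neg_one_pow (by rw [Nat.odd_iff]; omega)]; simp [ss, hn]
  · rw [Even.neg_one_pow (by rw [Nat.even_iff]; omega)]; simp [ss, hn]

lemma two_ne (hp : 5 ≤ p) : (2 : ZMod p) ≠ 0 := by
  have := cast_ne p (n := 2) (by norm_num) (by omega)
  simpa using this

lemma L_one (hp : 5 ≤ p) : L p (one p) = 0 := by
  have h := L_reflect p (one p)
  have he : L p (one p) = -L p (one p) := by
    rw [← h, L]; rfl
  have h2 : (2 : ZMod p) * L p (one p) = 0 := by linear_combination he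
  rcases mul_eq_zero.mp h2 with h3 | h3
  · exact absurd h3 (two_ne p hp)
  · exact h3

lemma sum_Ioo_units (g : ZMod p → ZMod p) :
    ∑ n ∈ Ioo 0 p, g (n : ZMod p) = ∑ x ∈ (univ : Finset (ZMod p)).erase 0, g x := by
  have hp5 : 1 < p := hF.out.one_lt
  haveI : NeZero p := ⟨by omega⟩
  refine Finset.sum_nbij' (fun n => (n : ZMod p)) (fun x => x.val) ?_ ?_ ?_ ?_ ?_
  · intro a ha
    rw [mem_Ioo] at ha
    simp only [mem_erase, mem_univ, and_true]
    exact cast_ne p ha.1 ha.2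
  · intro x hx
    simp only [mem_erase, mem_univ, and_true] at hx
    rw [mem_Ioo]
    constructor
    · exact Nat.pos_of_ne_zero fun h => hx ((ZMod.val_eq_zero x).mp h)
    · exact ZMod.val_lt x
  · intro a ha
    rw [mem_Ioo] at ha
    exact ZMod.val_cast_of_lt ha.2
  · intro x _
    exact (ZMod.natCast_val (R := ZMod p) x).trans (ZMod.cast_id p x)
  · intro a _; rfl

lemma D_one (hp : 5 ≤ p) : D p (one p) = 0 := by
  haveI : NeZero p := ⟨by omega⟩
  rw [D]
  simp only [one, one_mul, iv]
  rw [sum_Ioo_units p (fun x => x⁻¹ * x⁻¹)]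
  have h1 : ∑ x ∈ (univ : Finset (ZMod p)).erase 0, x⁻¹ * x⁻¹
      = ∑ x ∈ (univ : Finset (ZMod p)).erase 0, x * x := by
    refine Finset.sum_nbij' (fun x => x⁻¹) (fun x => x⁻¹) ?_ ?_ ?_ ?_ ?_
    · intro a ha
      simp only [mem_erase, mem_univ, and_true] at *
      exact inv_ne_zero ha
    · intro a ha
      simp only [mem_erase, mem_univ, and_true] at *
      exact inv_ne_zero ha
    · intro a _; exact inv_inv a
    · intro a _; exact inv_inv a
    · intro a _; rfl
  rw [h1]
  have h2 : ∑ x ∈ (univ : Finset (ZMod p)).erase 0, x * x = ∑ x : ZMod p, x * x := by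
    rw [← Finset.sum_erase_add _ _ (mem_univ (0 : ZMod p))]
    simp
  rw [h2]
  have h3 : ∑ x : ZMod p, x * x = ∑ x : ZMod p, x ^ 2 := by
    refine Finset.sum_congr rfl fun x _ => by ring
  rw [h3]
  have hcard : 2 < Fintype.card (ZMod p) - 1 := by rw [ZMod.card]; omega
  exact FiniteField.sum_pow_lt_card_sub_one (K := ZMod p) 2 hcard

lemma rr_succ (k : ℕ) : rr p (k + 1) = -rr p k := by
  have hk : k % 2 = 0 ∨ k % 2 = 1 := by omega
  rcases hk with hk|hk <;>
    (have e : (k + 1) % 2 = (k % 2 + 1) % 2 := by omega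
     rw [hk] at e
     simp [rr, e, hk])

lemma choose_cast (j : ℕ) (hj : j ≤ p - 1) : ((p - 1).choose j : ZMod p) = rr p j := by
  induction j with
  | zero => simp [rr]
  | succ k ih =>
    have hp1 : 1 ≤ p := le_of_lt hF.out.one_lt
    have hP : p.choose (k + 1) = (p - 1).choose k + (p - 1).choose (k + 1) := by
      have h := Nat.choose_succ_succ (p - 1) k
      simp only [Nat.succ_eq_add_one] at h
      rwa [show p - 1 + 1 = p by omega] at h
    have hdvd : p ∣ p.choose (k + 1) :=
      hF.out.dvd_choose_self (by omega) (by omega)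
    have hz : ((p.choose (k + 1) : ℕ) : ZMod p) = 0 :=
      (ZMod.natCast_eq_zero_iff _ _).mpr hdvd
    rw [hP] at hz
    push_cast at hz
    rw [ih (by omega)] at hz
    rw [rr_succ]
    linear_combination hz

lemma L_rr (hp : 5 ≤ p) : L p (rr p) = -(2 * qp p) := by
  have hp1 : 1 ≤ p := by omega
  have hpow : 2 ^ p = 2 * 2 ^ (p - 1) := by
    rw [← pow_succ']
    congr 1
    omega
  have h2p : 1 ≤ 2 ^ (p - 1) := Nat.one_le_two_pow
  -- p divides 2^(p-1) - 1
  have hdvd : p ∣ 2 ^ (p - 1) - 1 := by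
    have h2 : ((2 ^ (p - 1) - 1 : ℕ) : ZMod p) = 0 := by
      rw [Nat.cast_sub h2p]
      push_cast
      rw [ZMod.pow_card_sub_one_eq_one (two_ne p hp)]
      ring
    exact (ZMod.natCast_eq_zero_iff _ _).mp h2
  have hpQ : p * ((2 ^ (p - 1) - 1) / p) = 2 ^ (p - 1) - 1 := Nat.mul_div_cancel' hdvd
  -- sum of middle binomials
  have hsum : 2 + ∑ k ∈ Ioo 0 p, p.choose k = 2 ^ p := by
    have h := Nat.sum_range_choose p
    have hins : range (p + 1) = insert 0 (insert p (Ioo 0 p)) := by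
      ext x; simp only [mem_range, mem_insert, mem_Ioo]; omega
    rw [hins, Finset.sum_insert (by simp only [mem_insert, mem_Ioo]; omega),
      Finset.sum_insert (by simp only [mem_Ioo]; omega)] at h
    simp only [Nat.choose_zero_right, Nat.choose_self] at h
    omega
  have hdiv : ∑ k ∈ Ioo 0 p, p.choose k / p = 2 * ((2 ^ (p - 1) - 1) / p) := by
    apply Nat.eq_of_mul_eq_mul_left (hp0 p)
    rw [Finset.mul_sum]
    rw [Finset.sum_congr rfl fun k hk => Nat.mul_div_cancel'
      (hF.out.dvd_choose_self (by rw [mem_Ioo] at hk; omega) (by rw [mem_Ioo] at hk; omega))]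
    rw [Nat.mul_left_comm, hpQ]
    omega
  -- cast to ZMod p
  have hcast : ((∑ k ∈ Ioo 0 p, p.choose k / p : ℕ) : ZMod p) = 2 * qp p := by
    rw [hdiv, qp]
    push_cast
    ring
  rw [Nat.cast_sum] at hcast
  have hterm : ∀ k ∈ Ioo 0 p, ((p.choose k / p : ℕ) : ZMod p) = -(rr p k * iv p k) := by
    intro k hk
    rw [mem_Ioo] at hk
    have hckdvd : p ∣ p.choose k := hF.out.dvd_choose_self (by omega) (by omega)
    have hmul : p.choose k / p * k = (p - 1).choose (k - 1) := by
      apply Nat.eq_of_mul_eq_mul_left (hp0 p)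
      rw [← Nat.mul_assoc, Nat.mul_div_cancel' hckdvd]
      have h := Nat.add_one_mul_choose_eq (p - 1) (k - 1)
      rw [show p - 1 + 1 = p by omega, show k - 1 + 1 = k by omega] at h
      omega
    have h1 : ((p.choose k / p : ℕ) : ZMod p) * (k : ZMod p) = rr p (k - 1) := by
      rw [← Nat.cast_mul, hmul, choose_cast p (k - 1) (by omega)]
    have h2 : rr p (k - 1) = -rr p k := by
      have h3 := rr_succ p (k - 1)
      rw [show k - 1 + 1 = k by omega] at h3
      linear_combination h3
    have hki : (k : ZMod p) * iv p k = 1 := by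
      rw [iv]
      exact mul_inv_cancel₀ (cast_ne p hk.1 hk.2)
    linear_combination iv p k * h1 + iv p k * h2 - ((p.choose k / p : ℕ) : ZMod p) * hki
  rw [Finset.sum_congr rfl hterm] at hcast
  rw [L]
  rw [Finset.sum_neg_distrib] at hcast
  linear_combination -hcast

lemma iv_two_mul (k : ℕ) : iv p (2 * k) = 2⁻¹ * iv p k := by
  rw [iv, iv]
  push_cast
  rw [mul_inv]

lemma cc_odd {n : ℕ} (h : n % 2 = 1) : cc p n = 0 := by
  have hn : n % 4 = 1 ∨ n % 4 = 3 := by omega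
  rcases hn with hn|hn <;> simp [cc, hn]

lemma ss_even' {n : ℕ} (h : n % 2 = 0) : ss p n = 0 := by
  have hn : n % 4 = 0 ∨ n % 4 = 2 := by omega
  rcases hn with hn|hn <;> simp [ss, hn]

lemma cc_two_mul (k : ℕ) : cc p (2 * k) = rr p k := by
  have hk : k % 2 = 0 ∨ k % 2 = 1 := by omega
  rcases hk with hk|hk <;>
    (have e : (2 * k) % 4 = 2 * (k % 2) := by omega
     rw [hk] at e
     simp [cc, rr, e, hk])

lemma reindex_even_full (h2 : p % 2 = 1) (F : ℕ → ZMod p) :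
    ∑ n ∈ (Ioo 0 p).filter (fun n => n % 2 = 0), F n
      = ∑ k ∈ Ioc 0 ((p - 1) / 2), F (2 * k) := by
  refine Finset.sum_nbij' (fun n => n / 2) (fun k => 2 * k) ?_ ?_ ?_ ?_ ?_
  · intro a ha; simp only [mem_filter, mem_Ioo, mem_Ioc] at *; omega
  · intro a ha; simp only [mem_filter, mem_Ioo, mem_Ioc] at *; omega
  · intro a ha; simp only [mem_filter, mem_Ioo] at ha; omega
  · intro a ha; simp only [mem_Ioc] at ha; omega
  · intro a ha
    simp only [mem_filter, mem_Ioo] at ha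
    have e : 2 * (a / 2) = a := by omega
    rw [e]

lemma reindex_even_half (h2 : p % 2 = 1) (F : ℕ → ZMod p) :
    ∑ k ∈ (Ioc 0 ((p - 1) / 2)).filter (fun k => k % 2 = 0), F k
      = ∑ j ∈ Ioc 0 (p / 4), F (2 * j) := by
  refine Finset.sum_nbij' (fun n => n / 2) (fun k => 2 * k) ?_ ?_ ?_ ?_ ?_
  · intro a ha; simp only [mem_filter, mem_Ioc] at *; omega
  · intro a ha; simp only [mem_filter, mem_Ioc] at *; omega
  · intro a ha; simp only [mem_filter, mem_Ioc] at ha; omega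
  · intro a ha; simp only [mem_Ioc] at ha; omega
  · intro a ha
    simp only [mem_filter, mem_Ioc] at ha
    have e : 2 * (a / 2) = a := by omega
    rw [e]

lemma reindex_odd_half (h2 : p % 2 = 1) :
    ∑ k ∈ (Ioc 0 ((p - 1) / 2)).filter (fun k => k % 2 = 1), iv p k
      = ∑ j ∈ Ioc (p / 4) ((p - 1) / 2), -(2⁻¹ * iv p j) := by
  refine Finset.sum_nbij' (fun k => (p - k) / 2) (fun j => p - 2 * j) ?_ ?_ ?_ ?_ ?_
  · intro a ha; simp only [mem_filter, mem_Ioc] at *; omega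
  · intro a ha; simp only [mem_filter, mem_Ioc] at *; omega
  · intro a ha; simp only [mem_filter, mem_Ioc] at ha; omega
  · intro a ha; simp only [mem_Ioc] at ha; omega
  · intro a ha
    simp only [mem_filter, mem_Ioc] at ha
    have e : a = p - 2 * ((p - a) / 2) := by omega
    calc iv p a = iv p (p - 2 * ((p - a) / 2)) := by rw [← e]
    _ = -iv p (2 * ((p - a) / 2)) := iv_p_sub p (by omega)
    _ = -(2⁻¹ * iv p ((p - a) / 2)) := by rw [iv_two_mul]

lemma p_odd (hp : 5 ≤ p) : p % 2 = 1 := by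
  rcases Nat.Prime.eq_two_or_odd hF.out with h | h
  · omega
  · exact h

lemma L_cc (hp : 5 ≤ p) : L p (cc p) = 2⁻¹ * 2⁻¹ * L p (rr p) := by
  have h2 : p % 2 = 1 := p_odd p hp
  have hinv : (2 : ZMod p) * 2⁻¹ = 1 := mul_inv_cancel₀ (two_ne p hp)
  set t : ZMod p := 2⁻¹ with ht
  set Hh : ZMod p := ∑ k ∈ Ioc 0 ((p - 1) / 2), iv p k with hHh
  set HQ : ZMod p := ∑ j ∈ Ioc 0 (p / 4), iv p j with hHQ
  set E : ZMod p := ∑ k ∈ (Ioc 0 ((p - 1) / 2)).filter (fun k => k % 2 = 0), iv p k with hE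
  set O : ZMod p := ∑ k ∈ (Ioc 0 ((p - 1) / 2)).filter (fun k => k % 2 = 1), iv p k with hO
  have hEval : E = t * HQ := by
    rw [hE, reindex_even_half p h2 (iv p), hHQ, Finset.mul_sum]
    exact Finset.sum_congr rfl fun j _ => iv_two_mul p j
  have hOval : O = -(t * (Hh - HQ)) := by
    rw [hO, reindex_odd_half p h2]
    have hIoc : Hh - HQ = ∑ j ∈ Ioc (p / 4) ((p - 1) / 2), iv p j := by
      have hc := Finset.sum_Ioc_consecutive (iv p)
        (show 0 ≤ p / 4 by omega) (show p / 4 ≤ (p - 1) / 2 by omega)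
      rw [hHh, hHQ]
      linear_combination -hc
    rw [Finset.sum_neg_distrib, ← Finset.mul_sum, ← hIoc]
  have hLrr : L p (rr p) = Hh := by
    have hL1 := L_one p hp
    have hplus : L p (rr p) + L p (one p)
        = 2 * ∑ n ∈ (Ioo 0 p).filter (fun n => n % 2 = 0), iv p n := by
      rw [L, L, ← Finset.sum_add_distrib, Finset.sum_filter, Finset.mul_sum]
      refine Finset.sum_congr rfl fun n _ => ?_
      have hn : n % 2 = 0 ∨ n % 2 = 1 := by omega
      rcases hn with hn|hn <;> simp [rr, one, hn] <;> ring
    rw [reindex_even_full p h2 (iv p)] at hplus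
    have h2k : ∑ k ∈ Ioc 0 ((p - 1) / 2), iv p (2 * k) = t * Hh := by
      rw [hHh, Finset.mul_sum]
      exact Finset.sum_congr rfl fun k _ => iv_two_mul p k
    rw [h2k, hL1] at hplus
    linear_combination hplus + Hh * hinv
  have hLcc : L p (cc p) = t * (E - O) := by
    rw [L]
    have hfilter : ∑ n ∈ Ioo 0 p, cc p n * iv p n
        = ∑ n ∈ (Ioo 0 p).filter (fun n => n % 2 = 0), cc p n * iv p n := by
      rw [Finset.sum_filter]
      refine Finset.sum_congr rfl fun n _ => ?_
      have hn : n % 2 = 0 ∨ n % 2 = 1 := by omega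
      rcases hn with hn|hn
      · simp [hn]
      · simp [hn, cc_odd p hn]
    rw [hfilter, reindex_even_full p h2 (fun n => cc p n * iv p n)]
    have hterm : ∀ k ∈ Ioc 0 ((p - 1) / 2), cc p (2 * k) * iv p (2 * k)
        = t * (rr p k * iv p k) := by
      intro k _
      rw [cc_two_mul, iv_two_mul]
      ring
    rw [Finset.sum_congr rfl hterm, ← Finset.mul_sum]
    congr 1
    rw [hE, hO, ← Finset.sum_filter_add_sum_filter_not (Ioc 0 ((p - 1) / 2))
      (fun k => k % 2 = 0) (fun k => rr p k * iv p k)]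
    have hev : ∑ k ∈ (Ioc 0 ((p - 1) / 2)).filter (fun k => k % 2 = 0), rr p k * iv p k
        = ∑ k ∈ (Ioc 0 ((p - 1) / 2)).filter (fun k => k % 2 = 0), iv p k := by
      refine Finset.sum_congr rfl fun k hk => ?_
      simp only [mem_filter] at hk
      simp [rr, hk.2]
    have hod : ∑ k ∈ (Ioc 0 ((p - 1) / 2)).filter (fun k => ¬ k % 2 = 0), rr p k * iv p k
        = -∑ k ∈ (Ioc 0 ((p - 1) / 2)).filter (fun k => k % 2 = 1), iv p k := by
      rw [← Finset.sum_neg_distrib]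
      refine Finset.sum_congr ?_ fun k hk => ?_
      · ext x; simp only [mem_filter, mem_Ioc]; omega
      · simp only [mem_filter] at hk
        simp [rr, hk.2]
    rw [hev, hod]
    ring
  linear_combination hLcc + t * hEval - t * hOval - t * t * hLrr

lemma L_ss (hp : 5 ≤ p) : L p (ss p) = -(ep p * L p (cc p)) := by
  have h2 : p % 2 = 1 := p_odd p hp
  have h := L_reflect p (ss p)
  have hpt : ∑ n ∈ Ioo 0 p, ss p (p - n) * iv p n = ep p * L p (cc p) := by
    rw [L, Finset.mul_sum]
    refine Finset.sum_congr rfl fun n hn => ?_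
    rw [mem_Ioo] at hn
    rw [ss_reflect p (by omega) h2]
    ring
  rw [hpt] at h
  linear_combination h

lemma D_oo (hp : 5 ≤ p) : D p (oo p) = 0 := by
  have h2 : p % 2 = 1 := p_odd p hp
  have h := D_reflect p (oo p)
  have hpt : ∑ n ∈ Ioo 0 p, oo p (p - n) * iv p n * iv p n = D p (ee p) := by
    rw [D]
    refine Finset.sum_congr rfl fun n hn => ?_
    rw [mem_Ioo] at hn
    rw [oo_reflect p (by omega) h2]
  rw [hpt] at h
  have hsum : D p (ee p) + D p (oo p) = D p (one p) := by
    rw [D, D, D, ← Finset.sum_add_distrib]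
    refine Finset.sum_congr rfl fun n _ => ?_
    have := ee_add_oo p n
    simp only [one]
    linear_combination (iv p n * iv p n) * this
  rw [D_one p hp] at hsum
  have h2d : (2 : ZMod p) * D p (oo p) = 0 := by linear_combination hsum - h
  rcases mul_eq_zero.mp h2d with h3 | h3
  · exact absurd h3 (two_ne p hp)
  · exact h3

-- I1: 2 W(s,s) = Ls^2
lemma hWss (hp : 5 ≤ p) : (2 : ZMod p) * W p (ss p) (ss p) = L p (ss p) * L p (ss p) := by
  have h := stuffle p (ss p) (ss p)
  have hD : D p (fun n => ss p n * ss p n) = D p (oo p) := by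
    rw [D, D]
    exact Finset.sum_congr rfl fun n _ => by rw [ss_sq]
  rw [hD, D_oo p hp] at h
  linear_combination h

-- I2: W(c,c) = W(s,s)
lemma hWcc (hp : 5 ≤ p) : W p (cc p) (cc p) = W p (ss p) (ss p) := by
  have hodd := p_odd p hp
  have h := W_reflect p (cc p) (cc p)
  rw [h, W]
  refine Finset.sum_congr rfl fun x hx => ?_
  rw [mem_Pp] at hx
  rw [cc_reflect p (show x.1 ≤ p by omega) hodd, cc_reflect p (show x.2 ≤ p by omega) hodd]
  linear_combination (ss p x.1 * ss p x.2 * iv p x.1 * iv p x.2) * ep_sq p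

-- I3: 2 Tri(c,s) = Lc Ls
lemma hTriCS (hp : 5 ≤ p) : (2 : ZMod p) * Tri p (cc p) (ss p) = L p (cc p) * L p (ss p) := by
  have hodd := p_odd p hp
  have h := box p (cc p) (ss p)
  have hQ : ∑ x ∈ Qq p, cc p (p - x.1) * ss p (p - x.2) * iv p x.1 * iv p x.2
      = Tri p (cc p) (ss p) := by
    rw [Tri_symm, Tri]
    refine Finset.sum_congr rfl fun x hx => ?_
    rw [mem_Qq] at hx
    rw [cc_reflect p (show x.1 ≤ p by omega) hodd, ss_reflect p (show x.2 ≤ p by omega) hodd]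
    linear_combination (ss p x.1 * cc p x.2 * iv p x.1 * iv p x.2) * ep_sq p
  have hD : ∑ n ∈ Ioo 0 p, cc p (p - n) * ss p n * iv p n * iv p n = 0 := by
    have hpt : ∀ n ∈ Ioo 0 p, cc p (p - n) * ss p n * iv p n * iv p n
        = ep p * (oo p n * iv p n * iv p n) := by
      intro n hn
      rw [mem_Ioo] at hn
      rw [cc_reflect p (show n ≤ p by omega) hodd]
      linear_combination (ep p * iv p n * iv p n) * ss_sq p n
    rw [Finset.sum_congr rfl hpt, ← Finset.mul_sum]
    have hIsD : ∑ n ∈ Ioo 0 p, oo p n * iv p n * iv p n = D p (oo p) := rfl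
    rw [hIsD, D_oo p hp, mul_zero]
  rw [hQ, hD] at h
  linear_combination h

-- I4: W(s,1) = Tri(c,s)
lemma hWs1 (hp : 5 ≤ p) : W p (ss p) (one p) = Tri p (cc p) (ss p) := by
  have h := shuffle p (ss p) (one p)
  have hL : ∑ x ∈ Qq p, ss p (x.1 + x.2) * one p x.2 * iv p x.1 * iv p x.2
      = Tri p (ss p) (cc p) + Tri p (cc p) (ss p) := by
    rw [Tri, Tri, ← Finset.sum_add_distrib]
    refine Finset.sum_congr rfl fun x hx => ?_
    rw [ss_add]
    simp only [one]
    ring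
  have hR : ∑ x ∈ Pp p, ss p x.1 * one p (x.1 - x.2) * iv p x.1 * iv p x.2
      = W p (ss p) (one p) := by
    rw [W]
    exact Finset.sum_congr rfl fun x hx => by simp only [one]
  rw [hL, hR, Tri_symm] at h
  have h2 : (2 : ZMod p) * W p (ss p) (one p) = 2 * Tri p (cc p) (ss p) := by
    linear_combination -h
  exact mul_left_cancel₀ (two_ne p hp) h2

-- I5: W(1,s) + W(s,1) + D s = 0
lemma hstuf1s (hp : 5 ≤ p) :
    W p (one p) (ss p) + W p (ss p) (one p) + D p (ss p) = 0 := by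
  have h := stuffle p (one p) (ss p)
  have hD : D p (fun n => one p n * ss p n) = D p (ss p) := by
    rw [D, D]
    exact Finset.sum_congr rfl fun n _ => by simp [one]
  rw [hD, L_one p hp, zero_mul] at h
  exact h

-- I6: W(1,c) = ep * W(s,1)
lemma hW1c (hp : 5 ≤ p) : W p (one p) (cc p) = ep p * W p (ss p) (one p) := by
  have hodd := p_odd p hp
  have h := W_reflect p (one p) (cc p)
  rw [h, W, Finset.mul_sum]
  refine Finset.sum_congr rfl fun x hx => ?_
  rw [mem_Pp] at hx
  rw [cc_reflect p (show x.1 ≤ p by omega) hodd]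
  simp only [one]
  ring

-- I7: Tri(1,c) = W(1,c) + (W(c,c) + W(s,s))
lemma hTri1c (hp : 5 ≤ p) : Tri p (one p) (cc p)
    = W p (one p) (cc p) + (W p (cc p) (cc p) + W p (ss p) (ss p)) := by
  have h := shuffle p (one p) (cc p)
  have hL : ∑ x ∈ Qq p, one p (x.1 + x.2) * cc p x.2 * iv p x.1 * iv p x.2
      = Tri p (one p) (cc p) := by
    rw [Tri]
    exact Finset.sum_congr rfl fun x hx => by simp only [one]
  have hR : ∑ x ∈ Pp p, one p x.1 * cc p (x.1 - x.2) * iv p x.1 * iv p x.2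
      = W p (cc p) (cc p) + W p (ss p) (ss p) := by
    rw [W, W, ← Finset.sum_add_distrib]
    refine Finset.sum_congr rfl fun x hx => ?_
    rw [mem_Pp] at hx
    rw [cc_sub p (le_of_lt hx.2.1)]
    simp only [one]
    ring
  rw [hL, hR] at h
  exact h

-- I8: Tri(1,s) + ep * Tri(1,c) = D s
lemma hTri1s' (hp : 5 ≤ p) :
    Tri p (one p) (ss p) + ep p * Tri p (one p) (cc p) = D p (ss p) := by
  have hodd := p_odd p hp
  have h := box p (one p) (ss p)
  have hQ : ∑ x ∈ Qq p, one p (p - x.1) * ss p (p - x.2) * iv p x.1 * iv p x.2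
      = ep p * Tri p (one p) (cc p) := by
    rw [Tri, Finset.mul_sum]
    refine Finset.sum_congr rfl fun x hx => ?_
    rw [mem_Qq] at hx
    rw [ss_reflect p (show x.2 ≤ p by omega) hodd]
    simp only [one]
    ring
  have hD : ∑ n ∈ Ioo 0 p, one p (p - n) * ss p n * iv p n * iv p n = D p (ss p) := by
    rw [D]
    exact Finset.sum_congr rfl fun n _ => by simp [one]
  rw [hQ, hD, L_one p hp, zero_mul] at h
  linear_combination h

-- I9: Tri(1,s) = W(1,s) + (W(s,c) - W(c,s))
lemma hTri1s (hp : 5 ≤ p) : Tri p (one p) (ss p)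
    = W p (one p) (ss p) + (W p (ss p) (cc p) - W p (cc p) (ss p)) := by
  have h := shuffle p (one p) (ss p)
  have hL : ∑ x ∈ Qq p, one p (x.1 + x.2) * ss p x.2 * iv p x.1 * iv p x.2
      = Tri p (one p) (ss p) := by
    rw [Tri]
    exact Finset.sum_congr rfl fun x hx => by simp only [one]
  have hR : ∑ x ∈ Pp p, one p x.1 * ss p (x.1 - x.2) * iv p x.1 * iv p x.2
      = W p (ss p) (cc p) - W p (cc p) (ss p) := by
    rw [W, W, ← Finset.sum_sub_distrib]
    refine Finset.sum_congr rfl fun x hx => ?_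
    rw [mem_Pp] at hx
    rw [ss_sub p (le_of_lt hx.2.1)]
    simp only [one]
    ring
  rw [hL, hR] at h
  exact h

-- I10: W(c,s) + W(s,c) = Lc Ls
lemma hstufcs (hp : 5 ≤ p) :
    W p (cc p) (ss p) + W p (ss p) (cc p) = L p (cc p) * L p (ss p) := by
  have h := stuffle p (cc p) (ss p)
  have hD : D p (fun n => cc p n * ss p n) = 0 := by
    rw [D]
    have hpt : ∀ n ∈ Ioo 0 p, cc p n * ss p n * iv p n * iv p n = 0 := by
      intro n _
      rw [cc_mul_ss, zero_mul, zero_mul]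
    rw [Finset.sum_congr rfl hpt, Finset.sum_const_zero]
  rw [hD, add_zero] at h
  exact h

-- I11: Tri(c,c) + Tri(s,s) = Lc^2
lemma hboxcc (hp : 5 ≤ p) :
    Tri p (cc p) (cc p) + Tri p (ss p) (ss p) = L p (cc p) * L p (cc p) := by
  have hodd := p_odd p hp
  have h := box p (cc p) (cc p)
  have hQ : ∑ x ∈ Qq p, cc p (p - x.1) * cc p (p - x.2) * iv p x.1 * iv p x.2
      = Tri p (ss p) (ss p) := by
    rw [Tri]
    refine Finset.sum_congr rfl fun x hx => ?_
    rw [mem_Qq] at hx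
    rw [cc_reflect p (show x.1 ≤ p by omega) hodd, cc_reflect p (show x.2 ≤ p by omega) hodd]
    linear_combination (ss p x.1 * ss p x.2 * iv p x.1 * iv p x.2) * ep_sq p
  have hD : ∑ n ∈ Ioo 0 p, cc p (p - n) * cc p n * iv p n * iv p n = 0 := by
    have hpt : ∀ n ∈ Ioo 0 p, cc p (p - n) * cc p n * iv p n * iv p n = 0 := by
      intro n hn
      rw [mem_Ioo] at hn
      rw [cc_reflect p (show n ≤ p by omega) hodd]
      have := cc_mul_ss p n
      linear_combination (ep p * iv p n * iv p n) * this
    rw [Finset.sum_congr rfl hpt, Finset.sum_const_zero]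
  rw [hQ, hD, add_zero] at h
  exact h

-- I12: 2 W(c,r) = Tri(c,c) + Tri(s,s)
lemma hWcr (hp : 5 ≤ p) :
    (2 : ZMod p) * W p (cc p) (rr p) = Tri p (cc p) (cc p) + Tri p (ss p) (ss p) := by
  have h := shuffle p (cc p) (rr p)
  have hL : ∑ x ∈ Qq p, cc p (x.1 + x.2) * rr p x.2 * iv p x.1 * iv p x.2
      = Tri p (cc p) (cc p) + Tri p (ss p) (ss p) := by
    rw [Tri, Tri, ← Finset.sum_add_distrib]
    refine Finset.sum_congr rfl fun x hx => ?_
    rw [cc_add]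
    have e1 := cc_mul_rr p x.2
    have e2 := ss_mul_rr p x.2
    linear_combination (cc p x.1 * iv p x.1 * iv p x.2) * e1
      - (ss p x.1 * iv p x.1 * iv p x.2) * e2
  have hR : ∑ x ∈ Pp p, cc p x.1 * rr p (x.1 - x.2) * iv p x.1 * iv p x.2
      = W p (cc p) (rr p) := by
    rw [W]
    refine Finset.sum_congr rfl fun x hx => ?_
    rw [mem_Pp] at hx
    rw [rr_sub p (le_of_lt hx.2.1)]
    have e1 := cc_mul_rr p x.1
    linear_combination (rr p x.2 * iv p x.1 * iv p x.2) * e1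
  rw [hL, hR] at h
  linear_combination -h

-- I13: W(c,r) = -(ep * W(r,s))
lemma hWcr2 (hp : 5 ≤ p) : W p (cc p) (rr p) = -(ep p * W p (rr p) (ss p)) := by
  have hodd := p_odd p hp
  have h := W_reflect p (cc p) (rr p)
  rw [h, W, Finset.mul_sum, ← Finset.sum_neg_distrib]
  refine Finset.sum_congr rfl fun x hx => ?_
  rw [mem_Pp] at hx
  rw [rr_reflect p (show x.1 ≤ p by omega) hodd, cc_reflect p (show x.2 ≤ p by omega) hodd]
  ring

lemma cancel_two (hp : 5 ≤ p) {x : ZMod p} (h : (2 : ZMod p) * x = 0) : x = 0 :=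
  (mul_eq_zero.mp h).resolve_left (two_ne p hp)

lemma main_W (hp : 5 ≤ p) :
    W p (cc p) (ss p) = W p (one p) (ss p) + W p (rr p) (ss p) ∧
    W p (ss p) (cc p) = W p (rr p) (ss p) - W p (one p) (ss p) ∧
    W p (ss p) (ss p) = W p (cc p) (cc p) ∧
    W p (ss p) (ss p) * 8 = qp p * qp p := by
  have hinv : (2 : ZMod p) * 2⁻¹ = 1 := mul_inv_cancel₀ (two_ne p hp)
  have hee := ep_sq p
  have H1 := hWss p hp
  have H2 := hWcc p hp
  have H3 := hTriCS p hp
  have H4 := hWs1 p hp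
  have H5 := hstuf1s p hp
  have H6 := hW1c p hp
  have H7 := hTri1c p hp
  have H8 := hTri1s' p hp
  have H9 := hTri1s p hp
  have H10 := hstufcs p hp
  have H11 := hboxcc p hp
  have H12 := hWcr p hp
  have H13 := hWcr2 p hp
  have Hs2 := L_ss p hp
  have HLc := L_cc p hp
  have HLr := L_rr p hp
  set e := ep p with he
  set Lc := L p (cc p) with hLcd
  set Ls := L p (ss p) with hLsd
  set sg := D p (ss p) with hsg
  set a := W p (cc p) (ss p) with ha
  set b := W p (ss p) (cc p) with hb
  set u := W p (one p) (ss p) with hu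
  set v := W p (ss p) (one p) with hv
  set w := W p (rr p) (ss p) with hw
  have st1 : (2 : ZMod p) * v = -(e * (Lc * Lc)) := by
    linear_combination 2 * H4 + H3 + Lc * Hs2
  have st2 : (2 : ZMod p) * u = -(2 * sg) + e * (Lc * Lc) := by
    linear_combination 2 * H5 - st1
  have st3 : (2 : ZMod p) * W p (one p) (cc p) = -(Lc * Lc) := by
    linear_combination 2 * H6 + e * st1 - Lc * Lc * hee
  have st4 : (2 : ZMod p) * W p (ss p) (ss p) = Lc * Lc := by
    linear_combination H1 + (Ls - e * Lc) * Hs2 + Lc * Lc * hee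
  have st5 : (2 : ZMod p) * Tri p (one p) (cc p) = Lc * Lc := by
    linear_combination 2 * H7 + st3 + 2 * H2 + 2 * st4
  have st6 : (2 : ZMod p) * Tri p (one p) (ss p) = 2 * sg - e * (Lc * Lc) := by
    linear_combination 2 * H8 - e * st5
  have st7 : (4 : ZMod p) * a = -(4 * sg) := by
    linear_combination 2 * H9 + 2 * H10 - st6 + st2 + 2 * Lc * Hs2
  have st8 : (2 : ZMod p) * w = -(e * (Lc * Lc)) := by
    linear_combination 2 * e * H13 - 2 * w * hee - e * H12 - e * H11
  refine ⟨?_, ?_, H2.symm, ?_⟩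
  · have key : (2 : ZMod p) * (2 * (a - (u + w))) = 0 := by
      linear_combination st7 - 2 * st2 - 2 * st8
    have h0 := cancel_two p hp (cancel_two p hp key)
    linear_combination h0
  · have key : (2 : ZMod p) * (2 * (b - (w - u))) = 0 := by
      linear_combination 2 * H10 - 2 * H9 + st6 + st2 + 2 * Lc * Hs2 - 2 * st8
    have h0 := cancel_two p hp (cancel_two p hp key)
    linear_combination h0
  · have st9 : (4 : ZMod p) * Lc = -(2 * qp p) := by
      linear_combination 4 * HLc + 4 * (2⁻¹ * 2⁻¹ : ZMod p) * HLr
        - 2 * qp p * (2 * 2⁻¹ + 1) * hinv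
    have key : (2 : ZMod p) * (2 * (W p (ss p) (ss p) * 8 - qp p * qp p)) = 0 := by
      linear_combination 16 * st4 + (4 * Lc - 2 * qp p) * st9
    have h0 := cancel_two p hp (cancel_two p hp key)
    linear_combination h0

lemma W_ee (g : ℕ → ZMod p) :
    (2 : ZMod p) * W p (ee p) g = W p (one p) g + W p (rr p) g := by
  rw [W, W, W, ← Finset.sum_add_distrib, Finset.mul_sum]
  refine Finset.sum_congr rfl fun x _ => ?_
  have h := one_add_rr p x.1
  simp only [one]
  linear_combination -(g x.2 * iv p x.1 * iv p x.2) * h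

lemma W_oo (g : ℕ → ZMod p) :
    (2 : ZMod p) * W p (oo p) g = W p (one p) g - W p (rr p) g := by
  rw [W, W, W, ← Finset.sum_sub_distrib, Finset.mul_sum]
  refine Finset.sum_congr rfl fun x _ => ?_
  have h := one_sub_rr p x.1
  simp only [one]
  linear_combination -(g x.2 * iv p x.1 * iv p x.2) * h

lemma conv_Tpbb : Tpbb p = -W p (cc p) (ss p) := by
  rw [Tpbb, W_nested, ← Finset.sum_neg_distrib, Finset.sum_filter]
  refine Finset.sum_congr rfl fun m hm => ?_
  by_cases hme : m % 2 = 0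
  · rw [if_pos hme, Finset.sum_filter, ← Finset.sum_neg_distrib]
    refine Finset.sum_congr rfl fun n hn => ?_
    by_cases hno : n % 2 = 1
    · rw [if_pos hno, pow_half p hme, pow_oddy p hno, mul_inv]
      simp only [iv]
      ring
    · rw [if_neg hno, ss_even' p (by omega)]
      ring
  · rw [if_neg hme, cc_odd p (by omega)]
    simp

lemma conv_Tp1b : Tp1b p = -W p (ee p) (ss p) := by
  rw [Tp1b, W_nested, ← Finset.sum_neg_distrib, Finset.sum_filter]
  refine Finset.sum_congr rfl fun m hm => ?_
  by_cases hme : m % 2 = 0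
  · rw [if_pos hme, Finset.sum_filter, ← Finset.sum_neg_distrib]
    refine Finset.sum_congr rfl fun n hn => ?_
    by_cases hno : n % 2 = 1
    · rw [if_pos hno, pow_oddy p hno, mul_inv]
      simp only [iv, ee, if_pos hme]
      ring
    · rw [if_neg hno, ss_even' p (by omega)]
      ring
  · rw [if_neg hme]
    simp only [ee, if_neg hme]
    simp

lemma conv_Spbb : Spbb p = -W p (ss p) (cc p) := by
  rw [Spbb, W_nested, ← Finset.sum_neg_distrib, Finset.sum_filter]
  refine Finset.sum_congr rfl fun m hm => ?_
  by_cases hmo : m % 2 = 1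
  · rw [if_pos hmo, Finset.sum_filter, ← Finset.sum_neg_distrib]
    refine Finset.sum_congr rfl fun n hn => ?_
    by_cases hne : n % 2 = 0
    · rw [if_pos hne, pow_oddy p hmo, pow_half p hne, mul_inv]
      simp only [iv]
      ring
    · rw [if_neg hne, cc_odd p (by omega)]
      ring
  · rw [if_neg hmo, ss_even' p (by omega)]
    simp

lemma conv_tp1b : tp1b p = -W p (oo p) (ss p) := by
  rw [tp1b, W_nested, ← Finset.sum_neg_distrib, Finset.sum_filter]
  refine Finset.sum_congr rfl fun m hm => ?_
  by_cases hmo : m % 2 = 1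
  · rw [if_pos hmo, Finset.sum_filter, ← Finset.sum_neg_distrib]
    refine Finset.sum_congr rfl fun n hn => ?_
    by_cases hno : n % 2 = 1
    · rw [if_pos hno, pow_oddy p hno, mul_inv]
      simp only [iv, oo, if_pos hmo]
      ring
    · rw [if_neg hno, ss_even' p (by omega)]
      ring
  · rw [if_neg hmo]
    simp only [oo, if_neg hmo]
    simp

lemma conv_tpbb : tpbb p = W p (ss p) (ss p) := by
  rw [tpbb, W_nested, Finset.sum_filter]
  refine Finset.sum_congr rfl fun m hm => ?_
  by_cases hmo : m % 2 = 1
  · rw [if_pos hmo, Finset.sum_filter]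
    refine Finset.sum_congr rfl fun n hn => ?_
    by_cases hno : n % 2 = 1
    · rw [if_pos hno, pow_oddy p hmo, pow_oddy p hno, mul_inv]
      simp only [iv]
      ring
    · rw [if_neg hno, ss_even' (p := p) (n := n) (by omega)]
      ring
  · rw [if_neg hmo, ss_even' p (by omega)]
    simp

lemma conv_zeta : zeta2pbb p = W p (cc p) (cc p) := by
  rw [zeta2pbb, W_nested, Finset.sum_filter]
  refine Finset.sum_congr rfl fun m hm => ?_
  by_cases hme : m % 2 = 0
  · rw [if_pos hme, Finset.sum_filter]
    refine Finset.sum_congr rfl fun n hn => ?_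
    by_cases hne : n % 2 = 0
    · rw [if_pos hne, pow_half p hme, pow_half p hne, mul_inv]
      simp only [iv]
      ring
    · rw [if_neg hne, cc_odd (p := p) (n := n) (by omega)]
      ring
  · rw [if_neg hme, cc_odd p (by omega)]
    simp

end AMV

/-- For a prime `p ≥ 5`, in `ℤ/pℤ`: `T_p(1̄,1̄) = 2T_p(1,1̄)`,
`S_p(1̄,1̄) = -2t_p(1,1̄)`, and `t_p(1̄,1̄) = ζ^{(2)}_p(1̄,1̄) = q_p²/8`. -/
theorem stmt15 (p : ℕ) [Fact p.Prime] (hp : 5 ≤ p) :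
    Tpbb p = 2 * Tp1b p ∧ Spbb p = -2 * tp1b p ∧
    tpbb p = zeta2pbb p ∧ tpbb p = qp p ^ 2 / 8 := by
  obtain ⟨h1, h2, h3, h4⟩ := AMV.main_W p hp
  have he := AMV.W_ee p (AMV.ss p)
  have ho := AMV.W_oo p (AMV.ss p)
  have c1 := AMV.conv_Tpbb p
  have c2 := AMV.conv_Tp1b p
  have c3 := AMV.conv_Spbb p
  have c4 := AMV.conv_tp1b p
  have c5 := AMV.conv_tpbb p
  have c6 := AMV.conv_zeta p
  refine ⟨?_, ?_, ?_, ?_⟩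
  · rw [c1, c2]
    linear_combination he - h1
  · rw [c3, c4]
    linear_combination -h2 - ho
  · rw [c5, c6]
    exact h3
  · rw [c5]
    have h8 : (8 : ZMod p) ≠ 0 := by
      have h2ne := AMV.two_ne p hp
      have : (8 : ZMod p) = 2 * 2 * 2 := by norm_num
      rw [this]
      exact mul_ne_zero (mul_ne_zero h2ne h2ne) h2ne
    rw [eq_div_iff h8]
    linear_combination h4
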